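/- For all nonnegative integers n, m, N, the coefficient of q^n in the Gaussian binomial coefficient [N+m choose m]_q equals the number of partitions of n into at most m parts each of size at most N. -/

import Mathlib

/-- `pBdd n m N` is the number of partitions of `n` into at most `m` parts,
each part at most `N`; it is `0` for negative `n`. -/
noncomputable def pBdd (n : ℤ) (m N : ℕ) : ℕ :=
  if 0 ≤ n then
    Nat.card {π : Nat.Partition n.toNat //
      Multiset.card π.parts ≤ m ∧ ∀ i ∈ π.parts, i ≤ N}
  else 0

/-- `pAtMost n m` is the number of partitions of `n` into at most `m` parts;
it is `0` for negative `n`. -/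
noncomputable def pAtMost (n : ℤ) (m : ℕ) : ℕ :=
  if 0 ≤ n then
    Nat.card {π : Nat.Partition n.toNat // Multiset.card π.parts ≤ m}
  else 0

open Polynomial Finset

/-- The Gaussian binomial `[N+m choose m]_q` as a polynomial, defined by the
Pascal-type recurrence. -/
noncomputable def gaussPoly : ℕ → ℕ → Polynomial ℤ
  | 0, _ => 1
  | _ + 1, 0 => 1
  | m + 1, N + 1 =>
      gaussPoly (m + 1) N + gaussPoly m (N + 1) * Polynomial.X ^ (N + 1)
  termination_by m N => m + N

lemma prod_Icc_one_eq_range (m : ℕ) (f : ℕ → Polynomial ℤ) :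
    ∏ j ∈ Finset.Icc 1 m, f j = ∏ j ∈ Finset.range m, f (j + 1) := by
  induction m with
  | zero => simp
  | succ m ih =>
      rw [Finset.prod_Icc_succ_top (by omega), ih, Finset.prod_range_succ]

lemma gaussPoly_mul : ∀ m N : ℕ,
    gaussPoly m N * ∏ j ∈ Finset.Icc 1 m, (1 - (Polynomial.X : Polynomial ℤ) ^ j) =
      ∏ j ∈ Finset.Icc 1 m, (1 - Polynomial.X ^ (N + j))
  | 0, N => by simp [gaussPoly]
  | m + 1, 0 => by simp [gaussPoly]
  | m + 1, N + 1 => by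
      have h1 := gaussPoly_mul (m + 1) N
      have h2 := gaussPoly_mul m (N + 1)
      rw [prod_Icc_one_eq_range] at h1 h2 ⊢
      rw [prod_Icc_one_eq_range] at h1 h2 ⊢
      show gaussPoly (m+1) (N+1) * _ = _
      rw [show gaussPoly (m+1) (N+1)
            = gaussPoly (m + 1) N + gaussPoly m (N + 1) * Polynomial.X ^ (N + 1) from by
          rw [gaussPoly]]
      rw [add_mul, h1]
      have e1 : ∏ j ∈ Finset.range (m + 1), (1 - (Polynomial.X : Polynomial ℤ) ^ (N + (j + 1)))
          = (∏ j ∈ Finset.range m, (1 - Polynomial.X ^ (N + 1 + (j + 1))))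
              * (1 - Polynomial.X ^ (N + 1)) := by
        rw [Finset.prod_range_succ']
        congr 1
        · exact Finset.prod_congr rfl fun j _ => by rw [show N + (j + 1 + 1) = N + 1 + (j + 1) by omega]
      have e2 : ∏ j ∈ Finset.range (m + 1), (1 - (Polynomial.X : Polynomial ℤ) ^ (N + 1 + (j + 1)))
          = (∏ j ∈ Finset.range m, (1 - Polynomial.X ^ (N + 1 + (j + 1))))
              * (1 - Polynomial.X ^ (N + 1 + (m + 1))) := Finset.prod_range_succ _ _
      have e3 : ∏ j ∈ Finset.range (m + 1), (1 - (Polynomial.X : Polynomial ℤ) ^ (j + 1))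
          = (∏ j ∈ Finset.range m, (1 - Polynomial.X ^ (j + 1)))
              * (1 - Polynomial.X ^ (m + 1)) := Finset.prod_range_succ _ _
      rw [e1, e2, e3]
      have hX : (Polynomial.X : Polynomial ℤ) ^ (N + 1 + (m + 1))
          = Polynomial.X ^ (N + 1) * Polynomial.X ^ (m + 1) := by
        rw [← pow_add]
      linear_combination (Polynomial.X ^ (N + 1) * (1 - Polynomial.X ^ (m + 1))) * h2
      + (∏ j ∈ Finset.range m, (1 - (Polynomial.X : Polynomial ℤ) ^ (N + 1 + (j + 1)))) * hX

lemma pBdd_nonneg (n m N : ℕ) :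
    pBdd (n : ℤ) m N = Nat.card {π : Nat.Partition n //
      Multiset.card π.parts ≤ m ∧ ∀ i ∈ π.parts, i ≤ N} := by
  simp [pBdd]

lemma card_eq_one_of_all {n : ℕ} (hn : n = 0) (p : Nat.Partition n → Prop)
    (hp : ∀ π, p π) : Nat.card {π : Nat.Partition n // p π} = 1 := by
  subst hn
  haveI : Unique {π : Nat.Partition 0 // p π} :=
    { default := ⟨default, hp _⟩
      uniq := fun a => Subtype.ext (Subsingleton.elim _ _) }
  exact Nat.card_unique

lemma card_eq_zero_of_none {n : ℕ} (p : Nat.Partition n → Prop)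
    (hp : ∀ π, ¬ p π) : Nat.card {π : Nat.Partition n // p π} = 0 := by
  haveI : IsEmpty {π : Nat.Partition n // p π} := ⟨fun x => hp x.1 x.2⟩
  exact Nat.card_of_isEmpty

lemma pBdd_zero_left (n N : ℕ) : pBdd (n : ℤ) 0 N = if n = 0 then 1 else 0 := by
  rw [pBdd_nonneg]
  split_ifs with h
  · subst h
    exact card_eq_one_of_all rfl _ fun π => by simp
  · refine card_eq_zero_of_none _ fun π hπ => h ?_
    have : π.parts = 0 := Multiset.card_eq_zero.mp (Nat.le_zero.mp hπ.1)
    rw [← π.parts_sum, this]; rfl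

lemma pBdd_zero_right (n m : ℕ) : pBdd (n : ℤ) m 0 = if n = 0 then 1 else 0 := by
  rw [pBdd_nonneg]
  have hempty : ∀ (π : Nat.Partition n), (∀ i ∈ π.parts, i ≤ 0) → π.parts = 0 := by
    intro π h
    by_contra hne
    obtain ⟨i, hi⟩ := Multiset.exists_mem_of_ne_zero hne
    have h1 := π.parts_pos hi
    have h2 := h i hi
    omega
  split_ifs with h
  · subst h
    exact card_eq_one_of_all rfl _ fun π => by simp
  · refine card_eq_zero_of_none _ fun π hπ => h ?_
    rw [← π.parts_sum, hempty π hπ.2]; rfl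

lemma card_split {α : Type*} [Finite α] (p q : α → Prop) :
    Nat.card {x // p x} = Nat.card {x // p x ∧ q x} + Nat.card {x // p x ∧ ¬ q x} := by
  classical
  rw [← Nat.card_sum]
  refine Nat.card_congr ?_
  exact ((Equiv.sumCompl fun y : {x // p x} => q y.1).symm).trans
    (Equiv.sumCongr (Equiv.subtypeSubtypeEquivSubtypeInter p q)
      (Equiv.subtypeSubtypeEquivSubtypeInter p fun x => ¬ q x))

/-- The partitions of `n` with at most `m+1` parts, each at most `N+1`, which
contain a part equal to `N+1`, are in bijection with partitions of `n - (N+1)`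
with at most `m` parts, each at most `N+1`. -/
noncomputable def eraseEquiv (n m N : ℕ) (hn : N + 1 ≤ n) :
    {π : Nat.Partition n // (Multiset.card π.parts ≤ m + 1 ∧ ∀ i ∈ π.parts, i ≤ N + 1)
        ∧ (N + 1) ∈ π.parts} ≃
    {ρ : Nat.Partition (n - (N + 1)) //
        Multiset.card ρ.parts ≤ m ∧ ∀ i ∈ ρ.parts, i ≤ N + 1} where
  toFun := fun ⟨π, ⟨⟨hc, hb⟩, hm⟩⟩ =>
    ⟨⟨π.parts.erase (N + 1),
      fun hi => π.parts_pos (Multiset.mem_of_mem_erase hi),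
      by
        have h := congrArg Multiset.sum (Multiset.cons_erase hm)
        rw [Multiset.sum_cons, π.parts_sum] at h
        omega⟩,
      by
        constructor
        · rw [Multiset.card_erase_of_mem hm, Nat.pred_eq_sub_one]
          have h1 : 1 ≤ Multiset.card π.parts :=
            Multiset.card_pos_iff_exists_mem.mpr ⟨_, hm⟩
          omega
        · intro i hi
          exact hb i (Multiset.mem_of_mem_erase hi)⟩
  invFun := fun ⟨ρ, ⟨hc, hb⟩⟩ =>
    ⟨⟨(N + 1) ::ₘ ρ.parts,
      fun hi => by
        rcases Multiset.mem_cons.mp hi with h | h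
        · omega
        · exact ρ.parts_pos h,
      by rw [Multiset.sum_cons, ρ.parts_sum]; omega⟩,
      by
        refine ⟨⟨?_, ?_⟩, Multiset.mem_cons_self _ _⟩
        · rw [Multiset.card_cons]; omega
        · intro i hi
          rcases Multiset.mem_cons.mp hi with h | h
          · omega
          · exact hb i h⟩
  left_inv := fun ⟨π, ⟨⟨hc, hb⟩, hm⟩⟩ => by
    apply Subtype.ext
    apply Nat.Partition.ext
    exact Multiset.cons_erase hm
  right_inv := fun ⟨ρ, ⟨hc, hb⟩⟩ => by
    apply Subtype.ext
    apply Nat.Partition.ext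
    exact Multiset.erase_cons_head _ _

lemma pBdd_rec (n m N : ℕ) :
    pBdd (n : ℤ) (m + 1) (N + 1)
      = pBdd (n : ℤ) (m + 1) N + pBdd ((n : ℤ) - (N + 1)) m (N + 1) := by
  by_cases hn : N + 1 ≤ n
  · have hz : pBdd ((n : ℤ) - (N + 1)) m (N + 1)
        = Nat.card {ρ : Nat.Partition (n - (N + 1)) //
            Multiset.card ρ.parts ≤ m ∧ ∀ i ∈ ρ.parts, i ≤ N + 1} := by
      have h0 : (0 : ℤ) ≤ (n : ℤ) - (N + 1) := by omega
      have ht : ((n : ℤ) - (N + 1)).toNat = n - (N + 1) := by omega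
      rw [pBdd, if_pos h0, ht]
    rw [hz, pBdd_nonneg, pBdd_nonneg]
    rw [card_split (fun π : Nat.Partition n =>
        Multiset.card π.parts ≤ m + 1 ∧ ∀ i ∈ π.parts, i ≤ N + 1)
      (fun π => (N + 1) ∈ π.parts)]
    rw [add_comm (Nat.card _)]
    congr 1
    · -- partitions avoiding N+1 are exactly the ones bounded by N
      refine Nat.card_congr (Equiv.subtypeEquivRight fun π => ?_)
      constructor
      · rintro ⟨⟨hc, hb⟩, hm⟩
        refine ⟨hc, fun i hi => ?_⟩
        have := hb i hi
        rcases Nat.lt_or_ge i (N + 1) with h | h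
        · omega
        · exact absurd hi (by rw [show i = N + 1 by omega] at hi ⊢; exact fun _ => hm hi)
      · rintro ⟨hc, hb⟩
        refine ⟨⟨hc, fun i hi => (hb i hi).trans (by omega)⟩, fun hm => ?_⟩
        have := hb _ hm
        omega
    · exact Nat.card_congr (eraseEquiv n m N hn)
  · have h1 : pBdd ((n : ℤ) - (N + 1)) m (N + 1) = 0 := by
      rw [pBdd, if_neg (by omega)]
    rw [h1, add_zero, pBdd_nonneg, pBdd_nonneg]
    refine Nat.card_congr (Equiv.subtypeEquivRight fun π => ?_)
    have hb : ∀ i ∈ π.parts, i ≤ n := by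
      intro i hi
      calc i ≤ π.parts.sum := Multiset.le_sum_of_mem hi
        _ = n := π.parts_sum
    constructor
    · rintro ⟨hc, h⟩
      exact ⟨hc, fun i hi => by have := hb i hi; omega⟩
    · rintro ⟨hc, h⟩
      exact ⟨hc, fun i hi => (h i hi).trans (by omega)⟩

lemma gaussPoly_coeff : ∀ (m N : ℕ) (n : ℕ),
    (gaussPoly m N).coeff n = (pBdd (n : ℤ) m N : ℤ)
  | 0, N, n => by
      rw [show gaussPoly 0 N = 1 from by rw [gaussPoly], pBdd_zero_left,
        Polynomial.coeff_one]
      split_ifs <;> simp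
  | m + 1, 0, n => by
      rw [show gaussPoly (m + 1) 0 = 1 from by rw [gaussPoly], pBdd_zero_right,
        Polynomial.coeff_one]
      split_ifs <;> simp
  | m + 1, N + 1, n => by
      rw [show gaussPoly (m + 1) (N + 1)
            = gaussPoly (m + 1) N + gaussPoly m (N + 1) * Polynomial.X ^ (N + 1) from by
          rw [gaussPoly]]
      rw [Polynomial.coeff_add, Polynomial.coeff_mul_X_pow',
        gaussPoly_coeff (m + 1) N n, pBdd_rec]
      push_cast
      congr 1
      split_ifs with h
      · rw [gaussPoly_coeff m (N + 1) (n - (N + 1))]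
        have : ((n - (N + 1) : ℕ) : ℤ) = (n : ℤ) - (N + 1) := by omega
        rw [this]
      · rw [pBdd, if_neg (by omega)]
        simp
  termination_by m N => m + N

/-- The coefficient of `q^n` in the Gaussian binomial coefficient
`[N+m choose m]_q` (characterized as the polynomial `G` with
`G * ∏_{j=1}^m (1-q^j) = ∏_{j=1}^m (1-q^{N+j})`) equals the number of
partitions of `n` into at most `m` parts each of size at most `N`. -/
theorem stmt0 (m N : ℕ) (G : Polynomial ℤ)
    (hG : G * ∏ j ∈ Finset.Icc 1 m, (1 - Polynomial.X ^ j) =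
          ∏ j ∈ Finset.Icc 1 m, (1 - Polynomial.X ^ (N + j))) :
    ∀ n : ℕ, G.coeff n = (pBdd n m N : ℤ) := by
  have hP : (∏ j ∈ Finset.Icc 1 m, (1 - (Polynomial.X : Polynomial ℤ) ^ j)) ≠ 0 := by
    refine Finset.prod_ne_zero_iff.mpr fun j hj => ?_
    intro h
    have hj1 : 1 ≤ j := (Finset.mem_Icc.mp hj).1
    have := congrArg (fun p => Polynomial.coeff p 0) h
    simp [Polynomial.coeff_X_pow, (show ¬ (0 = j) by omega)] at this
  have hGeq : G = gaussPoly m N := by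
    apply mul_right_cancel₀ hP
    rw [hG, gaussPoly_mul]
  intro n
  rw [hGeq, gaussPoly_coeff]
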